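/- Theorem 2 (identification of the average treatment effect ATE(k) in platform trials): under assumptions (P-k-all), (I-k-all), (C-k-all), (Extra), (P-0-all), (I-0-all) and (C-0-all), the average treatment effect ATE(k) := 𝔼[Yᵏ − Y⁰] satisfies ATE(k) = Σ_{(w,e): 𝒫(W=w,E=e)>0} (μ_oc(k,w,e) − μ_all(0,w,e)) · p(w,e). -/

import Mathlib

open MeasureTheory Finset

/-- Conditional expectation given an event: `𝔼[X | B] := 𝔼[X · 1_B] / 𝒫(B)`. -/
noncomputable def condMean {Ω : Type*} [MeasurableSpace Ω] (P : Measure Ω)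
    (X : Ω → ℝ) (B : Set Ω) : ℝ :=
  (∫ ω, B.indicator X ω ∂P) / (P B).toReal

/-- Theorem 2: identification of the average treatment effect
`ATE(k) := 𝔼[Yᵏ − Y⁰]` in platform trials, under (P-k-all), (I-k-all), (C-k-all),
(Extra), (P-0-all), (I-0-all) and (C-0-all). -/
theorem ATE_identification
    {Ω : Type*} [MeasurableSpace Ω] (P : Measure Ω) [IsProbabilityMeasure P]
    {𝓦 ℰ : Type*} [Fintype 𝓦] [Fintype ℰ] [Nonempty 𝓦] [Nonempty ℰ]
    [MeasurableSpace 𝓦] [MeasurableSingletonClass 𝓦]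
    [MeasurableSpace ℰ] [MeasurableSingletonClass ℰ]
    (W : Ω → 𝓦) (E : Ω → ℰ) (V : Ω → Fin 2) {K : ℕ} (A : Ω → Fin (K + 1))
    (k : Fin (K + 1)) (Y Yk Y0 : Ω → ℝ)
    (hW : Measurable W) (hE : Measurable E) (hV : Measurable V) (hA : Measurable A)
    (hY : Integrable Y P) (hYk : Integrable Yk P) (hY0 : Integrable Y0 P)
    -- (P-k-all) positivity for arm k among all units
    (hPkall : ∀ (w : 𝓦) (e : ℰ), 0 < P {ω | W ω = w ∧ E ω = e} →
      0 < P {ω | A ω = k ∧ W ω = w ∧ E ω = e ∧ V ω = 1})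
    -- (I-k-all) weak A-ignorability for arm k among all units
    (hIkall : ∀ (w : 𝓦) (e : ℰ), 0 < P {ω | A ω = k ∧ W ω = w ∧ E ω = e} →
      condMean P Yk {ω | W ω = w ∧ E ω = e} =
        condMean P Yk {ω | A ω = k ∧ W ω = w ∧ E ω = e})
    -- (C-k-all) consistency in mean for arm k among all units
    (hCkall : ∀ (w : 𝓦) (e : ℰ), 0 < P {ω | A ω = k ∧ W ω = w ∧ E ω = e} →
      condMean P Yk {ω | A ω = k ∧ W ω = w ∧ E ω = e} =
        condMean P Y {ω | A ω = k ∧ W ω = w ∧ E ω = e})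
    -- (Extra) extrapolation of outcome mechanism among the treated
    (hExtra : ∀ (w : 𝓦) (e : ℰ), 0 < P {ω | A ω = k ∧ W ω = w ∧ E ω = e ∧ V ω = 1} →
      condMean P Y {ω | A ω = k ∧ W ω = w ∧ E ω = e ∧ V ω = 1} =
        condMean P Y {ω | A ω = k ∧ W ω = w ∧ E ω = e})
    -- (P-0-all) positivity of the shared control arm among all units
    (hP0all : ∀ (w : 𝓦) (e : ℰ), 0 < P {ω | W ω = w ∧ E ω = e} →
      0 < P {ω | A ω = 0 ∧ W ω = w ∧ E ω = e})
    -- (I-0-all) weak A-ignorability for arm 0 among all units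
    (hI0all : ∀ (w : 𝓦) (e : ℰ), 0 < P {ω | A ω = 0 ∧ W ω = w ∧ E ω = e} →
      condMean P Y0 {ω | W ω = w ∧ E ω = e} =
        condMean P Y0 {ω | A ω = 0 ∧ W ω = w ∧ E ω = e})
    -- (C-0-all) consistency in mean for arm 0 among all units
    (hC0all : ∀ (w : 𝓦) (e : ℰ), 0 < P {ω | A ω = 0 ∧ W ω = w ∧ E ω = e} →
      condMean P Y0 {ω | A ω = 0 ∧ W ω = w ∧ E ω = e} =
        condMean P Y {ω | A ω = 0 ∧ W ω = w ∧ E ω = e})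
    :
    ∫ ω, (Yk ω - Y0 ω) ∂P =
      ∑ w : 𝓦, ∑ e : ℰ,
        if 0 < P {ω | W ω = w ∧ E ω = e} then
          (condMean P Y {ω | A ω = k ∧ W ω = w ∧ E ω = e ∧ V ω = 1} -
               condMean P Y {ω | A ω = 0 ∧ W ω = w ∧ E ω = e}) *
            (P {ω | W ω = w ∧ E ω = e}).toReal
        else 0 := by

  classical
  -- measurability of the basic sets
  have mB0 : ∀ (w : 𝓦) (e : ℰ), MeasurableSet {ω | W ω = w ∧ E ω = e} := fun w e =>
    (hW (measurableSet_singleton w)).inter (hE (measurableSet_singleton e))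
  have mBk : ∀ (w : 𝓦) (e : ℰ), MeasurableSet {ω | A ω = k ∧ W ω = w ∧ E ω = e} :=
    fun w e => (hA (measurableSet_singleton k)).inter (mB0 w e)
  -- pointwise decomposition of any function along the partition by (W, E)
  have hdecomp : ∀ (X : Ω → ℝ) (ω : Ω),
      (∑ w : 𝓦, ∑ e : ℰ, ({ω' | W ω' = w ∧ E ω' = e}).indicator X ω) = X ω := by
    intro X ω
    rw [Finset.sum_eq_single (W ω)]
    · rw [Finset.sum_eq_single (E ω)]
      · simp [Set.indicator_apply]
      · intro e _ he
        simp [Set.indicator_apply, Ne.symm he]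
      · simp
    · intro w _ hw
      apply Finset.sum_eq_zero
      intro e _
      simp [Set.indicator_apply, Ne.symm hw]
    · simp
  -- integral as a sum over the partition
  have hsum : ∀ (X : Ω → ℝ), Integrable X P →
      ∫ ω, X ω ∂P =
        ∑ w : 𝓦, ∑ e : ℰ, ∫ ω, ({ω' | W ω' = w ∧ E ω' = e}).indicator X ω ∂P := by
    intro X hX
    have h1 : ∫ ω, X ω ∂P =
        ∫ ω, (∑ w : 𝓦, ∑ e : ℰ, ({ω' | W ω' = w ∧ E ω' = e}).indicator X ω) ∂P := by
      refine integral_congr_ae (Filter.Eventually.of_forall fun ω => ?_)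
      exact (hdecomp X ω).symm
    rw [h1, integral_finset_sum]
    · refine Finset.sum_congr rfl fun w _ => ?_
      rw [integral_finset_sum]
      intro e _
      exact hX.indicator (mB0 w e)
    · intro w _
      exact (integrable_finset_sum _ fun e _ => hX.indicator (mB0 w e))
  -- expression of the integral over a positive-probability event
  have hint : ∀ (X : Ω → ℝ) (B : Set Ω), MeasurableSet B →
      ∫ ω, B.indicator X ω ∂P = condMean P X B * (P B).toReal := by
    intro X B hB
    by_cases h0 : P B = 0
    · have : ∫ ω, B.indicator X ω ∂P = 0 := by
        rw [integral_indicator hB, Measure.restrict_eq_zero.2 h0, integral_zero_measure]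
      rw [this, h0]
      simp [condMean, this]
    · have hpos : (P B).toReal ≠ 0 := by
        have := measure_ne_top P B
        exact ENNReal.toReal_ne_zero.2 ⟨h0, this⟩
      rw [condMean, div_mul_cancel₀ _ hpos]
  -- main computation
  rw [hsum (fun ω => Yk ω - Y0 ω) (hYk.sub hY0)]
  refine Finset.sum_congr rfl fun w _ => Finset.sum_congr rfl fun e _ => ?_
  set B0 := {ω | W ω = w ∧ E ω = e} with hB0def
  by_cases hpos : 0 < P B0
  · rw [if_pos hpos]
    -- positivity facts
    have hkV : 0 < P {ω | A ω = k ∧ W ω = w ∧ E ω = e ∧ V ω = 1} := hPkall w e hpos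
    have hsubset : {ω | A ω = k ∧ W ω = w ∧ E ω = e ∧ V ω = 1} ⊆
        {ω | A ω = k ∧ W ω = w ∧ E ω = e} := by
      intro ω hω
      exact ⟨hω.1, hω.2.1, hω.2.2.1⟩
    have hk : 0 < P {ω | A ω = k ∧ W ω = w ∧ E ω = e} :=
      lt_of_lt_of_le hkV (measure_mono hsubset)
    have h0a : 0 < P {ω | A ω = 0 ∧ W ω = w ∧ E ω = e} := hP0all w e hpos
    -- chain of identifications
    have chainK : condMean P Yk B0 =
        condMean P Y {ω | A ω = k ∧ W ω = w ∧ E ω = e ∧ V ω = 1} := by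
      rw [hIkall w e hk, hCkall w e hk, ← hExtra w e hkV]
    have chain0 : condMean P Y0 B0 =
        condMean P Y {ω | A ω = 0 ∧ W ω = w ∧ E ω = e} := by
      rw [hI0all w e h0a, hC0all w e h0a]
    -- split the indicator of the difference
    have hsplit : ∫ ω, B0.indicator (fun ω => Yk ω - Y0 ω) ω ∂P =
        (∫ ω, B0.indicator Yk ω ∂P) - ∫ ω, B0.indicator Y0 ω ∂P := by
      have heq : ∀ ω, B0.indicator (fun ω => Yk ω - Y0 ω) ω =
          B0.indicator Yk ω - B0.indicator Y0 ω := by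
        intro ω
        by_cases hω : ω ∈ B0 <;> simp [Set.indicator_apply, hω]
      rw [integral_congr_ae (Filter.Eventually.of_forall heq)]
      exact integral_sub (hYk.indicator (mB0 w e)) (hY0.indicator (mB0 w e))
    rw [hsplit, hint Yk B0 (mB0 w e), hint Y0 B0 (mB0 w e), chainK, chain0, ← sub_mul]
  · rw [if_neg hpos]
    have h0 : P B0 = 0 := by
      by_contra h
      exact hpos (lt_of_le_of_ne zero_le (Ne.symm h))
    rw [integral_indicator (mB0 w e), Measure.restrict_eq_zero.2 h0, integral_zero_measure]
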